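/- Let R be a commutative ring, ≺ a monomial ordering on the standard monomial basis B of R⟨X₁,…,Xₙ⟩, and G a monic subset generating the ideal I = ⟨G⟩. Then G is a monic Gröbner basis of I if and only if the canonical image of the set N(G) of normal monomials in the quotient algebra R⟨X₁,…,Xₙ⟩/I forms a free R-basis of R⟨X₁,…,Xₙ⟩/I, and in that case the canonical image of N(G) in R⟨X₁,…,Xₙ⟩/⟨LM(I)⟩ is also a free R-basis of R⟨X₁,…,Xₙ⟩/⟨LM(I)⟩. -/

import Mathlib

noncomputable section
open MonoidAlgebra
open scoped Classical

/-- Words in the alphabet `X_1, ..., X_n`: the standard monomial basis `B`. -/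
abbrev Word (n : ℕ) : Type := FreeMonoid (Fin n)

/-- The free `R`-algebra `R⟨X_1, ..., X_n⟩`, realized as the monoid algebra of the
free monoid on `n` letters over `R`. -/
abbrev FreeAlg (R : Type) [CommRing R] (n : ℕ) : Type := MonoidAlgebra R (Word n)

variable {R : Type} [CommRing R] {n : ℕ}

/-- The monomial (word) `w` viewed as an element of the free algebra. -/
def mono (R : Type) [CommRing R] {n : ℕ} (w : Word n) : FreeAlg R n :=
  MonoidAlgebra.of R (Word n) w

/-- A monomial ordering: a well-ordering on words compatible with two-sided multiplication. -/
def IsMonomialOrder (n : ℕ) [LinearOrder (Word n)] : Prop :=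
  WellFoundedLT (Word n) ∧ ∀ w u v s : Word n, u < v → w * u * s < w * v * s

/-- The leading monomial of `f` (with junk value `1` for `f = 0`). -/
def LMon [LinearOrder (Word n)] (f : FreeAlg R n) : Word n :=
  if h : f = 0 then 1 else f.coeff.support.max'
    (Finsupp.support_nonempty_iff.mpr
      (mt (fun h' => by rw [← MonoidAlgebra.ofCoeff_coeff f, h']; rfl) h))

/-- The leading coefficient of `f`. -/
def LCoef [LinearOrder (Word n)] (f : FreeAlg R n) : R := f.coeff (LMon f)

/-- `f` is monic: it is nonzero and its leading coefficient is `1`. -/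
def IsMonic [LinearOrder (Word n)] (f : FreeAlg R n) : Prop := f ≠ 0 ∧ LCoef f = 1

/-- `v` divides `u` as words: `u = w * v * s` for some words `w, s`. -/
def MDvd {n : ℕ} (v u : Word n) : Prop := ∃ w s : Word n, u = w * v * s

/-- `G` is a monic Gröbner basis of the two-sided ideal `I`: every element of `G` is monic,
and the leading monomial of every nonzero element of `I` is divisible by the leading
monomial of some element of `G`. -/
def IsMonicGB [LinearOrder (Word n)] (G : Set (FreeAlg R n))
    (I : TwoSidedIdeal (FreeAlg R n)) : Prop :=
  (∀ g ∈ G, IsMonic g) ∧ ∀ f ∈ I, f ≠ 0 → ∃ g ∈ G, MDvd (LMon g) (LMon f)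

/-- The set `N(G)` of normal words modulo `G`: words not divisible by any `LM(g)`, `g ∈ G`. -/
def NormalWords [LinearOrder (Word n)] (G : Set (FreeAlg R n)) : Set (Word n) :=
  {u | ∀ g ∈ G, ¬ MDvd (LMon g) u}

/-- The set `LM(S)` of leading monomials of the nonzero elements of `S`. -/
def LMset [LinearOrder (Word n)] (S : Set (FreeAlg R n)) : Set (Word n) :=
  {w | ∃ f ∈ S, f ≠ 0 ∧ LMon f = w}

/-- The underlying `R`-submodule of a two-sided ideal of the free algebra. -/
def idealSubmodule (I : TwoSidedIdeal (FreeAlg R n)) : Submodule R (FreeAlg R n) :=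
  Submodule.restrictScalars R (TwoSidedIdeal.asIdeal I)

/-- The canonical images of the words in `S` form a free `R`-basis of the quotient of the
free algebra by the two-sided ideal `I` (equivalently, they are `R`-linearly independent
and span the quotient). -/
def ImageFreeBasis (I : TwoSidedIdeal (FreeAlg R n)) (S : Set (Word n)) : Prop :=
  LinearIndependent R (fun u : S => (idealSubmodule I).mkQ (mono R (u : Word n))) ∧
  Submodule.span R
    (Set.range fun u : S => (idealSubmodule I).mkQ (mono R (u : Word n))) = ⊤

section Aux

variable [LinearOrder (Word n)]

lemma mem_idealSubmodule {I : TwoSidedIdeal (FreeAlg R n)} {x : FreeAlg R n} :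
    x ∈ idealSubmodule I ↔ x ∈ I := Iff.rfl

lemma smul_mem_tsi {I : TwoSidedIdeal (FreeAlg R n)} (c : R) {x : FreeAlg R n} (hx : x ∈ I) :
    c • x ∈ I := by
  rw [Algebra.smul_def]
  exact I.mul_mem_left _ _ hx

lemma LMon_mem_support {f : FreeAlg R n} (hf : f ≠ 0) : LMon f ∈ f.coeff.support := by
  rw [LMon, dif_neg hf]
  exact Finset.max'_mem _ _

lemma apply_LMon_ne_zero {f : FreeAlg R n} (hf : f ≠ 0) : f.coeff (LMon f) ≠ 0 :=
  Finsupp.mem_support_iff.mp (LMon_mem_support hf)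

lemma le_LMon {f : FreeAlg R n} (hf : f ≠ 0) {u : Word n} (hu : f.coeff u ≠ 0) : u ≤ LMon f := by
  rw [LMon, dif_neg hf]
  exact Finset.le_max' _ _ (Finsupp.mem_support_iff.mpr hu)

lemma apply_eq_zero_of_LMon_lt {f : FreeAlg R n} {u : Word n} (h : LMon f < u) : f.coeff u = 0 := by
  by_cases hf : f = 0
  · simp [hf]
  · by_contra hu
    exact absurd (le_LMon hf hu) (not_le.mpr h)

lemma LMon_eq_of {f : FreeAlg R n} {t : Word n} (ht : f.coeff t ≠ 0)
    (h : ∀ u, t < u → f.coeff u = 0) : LMon f = t := by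
  have hf : f ≠ 0 := fun h0 => ht (by simp [h0])
  refine le_antisymm ?_ (le_LMon hf ht)
  by_contra hlt
  exact apply_LMon_ne_zero hf (h _ (not_le.mp hlt))

lemma LMon_lt_of {f : FreeAlg R n} {t : Word n} (hf : f ≠ 0)
    (h : ∀ u, t ≤ u → f.coeff u = 0) : LMon f < t := by
  by_contra hle
  exact apply_LMon_ne_zero hf (h _ (not_lt.mp hle))

lemma mono_eq_single (w : Word n) : mono R w = MonoidAlgebra.single w (1 : R) := rfl

lemma single_eq_smul_mono (u : Word n) (c : R) :
    (MonoidAlgebra.single u c : FreeAlg R n) = c • mono R u := by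
  rw [mono_eq_single, MonoidAlgebra.smul_single', mul_one]

lemma mulMono_eq_mapDomain (a b : Word n) (g : FreeAlg R n) :
    mono R a * g * mono R b = MonoidAlgebra.mapDomain (fun u => a * u * b) g := by
  induction g using MonoidAlgebra.induction with
  | zero => simp
  | single_add u c g hu hc ih =>
    rw [mul_add, add_mul, ih, MonoidAlgebra.mapDomain_add, MonoidAlgebra.mapDomain_single]
    congr 1
    rw [mono_eq_single, mono_eq_single, MonoidAlgebra.single_mul_single,
      MonoidAlgebra.single_mul_single, one_mul, mul_one]

lemma wordMul_strictMono (hord : IsMonomialOrder n) (a b : Word n) :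
    StrictMono fun u : Word n => a * u * b :=
  fun u v h => hord.2 a u v b h

lemma mulMono_apply (hord : IsMonomialOrder n) (a b : Word n) (g : FreeAlg R n) (u : Word n) :
    (mono R a * g * mono R b).coeff (a * u * b) = g.coeff u := by
  rw [mulMono_eq_mapDomain]
  exact Finsupp.mapDomain_apply (wordMul_strictMono hord a b).injective _ _

lemma mulMono_apply_eq_zero (hord : IsMonomialOrder n) (a b : Word n) {g : FreeAlg R n}
    (hg : g ≠ 0) {v : Word n} (hv : a * LMon g * b < v) :
    (mono R a * g * mono R b).coeff v = 0 := by
  rw [mulMono_eq_mapDomain]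
  by_contra h
  have hv' : v ∈ (Finsupp.mapDomain (fun u => a * u * b) g.coeff).support :=
    Finsupp.mem_support_iff.mpr h
  rw [Finsupp.mapDomain_support_of_injective (wordMul_strictMono hord a b).injective] at hv'
  obtain ⟨u, hu, rfl⟩ := Finset.mem_image.mp hv'
  have hle : u ≤ LMon g := le_LMon hg (Finsupp.mem_support_iff.mp hu)
  exact absurd ((wordMul_strictMono hord a b).monotone hle) (not_le.mpr hv)

lemma exists_dvd_of_not_normal {G : Set (FreeAlg R n)} {w : Word n}
    (hw : w ∉ NormalWords G) : ∃ g ∈ G, ∃ a b : Word n, w = a * LMon g * b := by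
  by_contra h
  push_neg at h
  exact hw fun g hg hdvd => by
    obtain ⟨a, b, hab⟩ := hdvd
    exact h g hg a b hab

lemma redStep (hord : IsMonomialOrder n) {G : Set (FreeAlg R n)}
    (hmonic : ∀ g ∈ G, IsMonic g) {w : Word n} (hw : w ∉ NormalWords G) :
    ∃ p : FreeAlg R n, p ∈ TwoSidedIdeal.span G ∧ p.coeff w = 1 ∧ ∀ v, w < v → p.coeff v = 0 := by
  obtain ⟨g, hg, a, b, rfl⟩ := exists_dvd_of_not_normal hw
  obtain ⟨hg0, hgc⟩ := hmonic g hg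
  refine ⟨mono R a * g * mono R b, ?_, ?_, fun v hv => mulMono_apply_eq_zero hord a b hg0 hv⟩
  · exact TwoSidedIdeal.mul_mem_right _ _ _
      (TwoSidedIdeal.mul_mem_left _ _ _ (TwoSidedIdeal.subset_span hg))
  · rw [mulMono_apply hord]
    exact hgc

lemma mkQ_eq_sum (I : TwoSidedIdeal (FreeAlg R n)) (f : FreeAlg R n) :
    (idealSubmodule I).mkQ f = f.coeff.sum fun u c => c • (idealSubmodule I).mkQ (mono R u) := by
  conv_lhs => rw [← MonoidAlgebra.sum_coeff_single f]
  rw [map_finsuppSum]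
  refine Finsupp.sum_congr fun u _ => ?_
  rw [single_eq_smul_mono, map_smul]

lemma mkQ_embDomain {G : Set (FreeAlg R n)} (I : TwoSidedIdeal (FreeAlg R n))
    (l : {u : Word n // u ∈ NormalWords G} →₀ R) :
    (idealSubmodule I).mkQ (MonoidAlgebra.ofCoeff (Finsupp.embDomain (Function.Embedding.subtype _) l)) =
      Finsupp.linearCombination R
        (fun u : NormalWords G => (idealSubmodule I).mkQ (mono R (u : Word n))) l := by
  rw [mkQ_eq_sum, MonoidAlgebra.coeff_ofCoeff, Finsupp.sum_embDomain, Finsupp.linearCombination_apply]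
  rfl

lemma linearIndependent_normal {G : Set (FreeAlg R n)} {I : TwoSidedIdeal (FreeAlg R n)}
    (h : ∀ f : FreeAlg R n, f ∈ I → (∀ u ∈ f.coeff.support, u ∈ NormalWords G) → f = 0) :
    LinearIndependent R
      (fun u : NormalWords G => (idealSubmodule I).mkQ (mono R (u : Word n))) := by
  rw [linearIndependent_iff]
  intro l hl
  set F : FreeAlg R n := MonoidAlgebra.ofCoeff (Finsupp.embDomain (Function.Embedding.subtype _) l) with hF
  have hmk : (idealSubmodule I).mkQ F = 0 := by rw [hF, mkQ_embDomain, hl]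
  have hFI : F ∈ I := by
    have : F ∈ LinearMap.ker (idealSubmodule I).mkQ := by rw [LinearMap.mem_ker, hmk]
    rwa [Submodule.ker_mkQ] at this
  have hFsupp : ∀ u ∈ F.coeff.support, u ∈ NormalWords G := by
    intro u hu
    rw [hF, MonoidAlgebra.coeff_ofCoeff, Finsupp.support_embDomain, Finset.mem_map] at hu
    obtain ⟨a, _, rfl⟩ := hu
    exact a.2
  have hF0 : F = 0 := h F hFI hFsupp
  rwa [hF, ← MonoidAlgebra.coeff_inj, MonoidAlgebra.coeff_ofCoeff, MonoidAlgebra.coeff_zero,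
    Finsupp.embDomain_eq_zero] at hF0

lemma normal_eq_zero_of_linearIndependent {G : Set (FreeAlg R n)}
    {I : TwoSidedIdeal (FreeAlg R n)}
    (h : LinearIndependent R
      (fun u : NormalWords G => (idealSubmodule I).mkQ (mono R (u : Word n))))
    {f : FreeAlg R n} (hfI : f ∈ I) (hfs : ∀ u ∈ f.coeff.support, u ∈ NormalWords G) : f = 0 := by
  set l := Finsupp.subtypeDomain (· ∈ NormalWords G) f.coeff with hl
  have hFl : MonoidAlgebra.ofCoeff (Finsupp.embDomain (Function.Embedding.subtype _) l) = f := by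
    rw [hl, ← Finsupp.extendDomain_eq_embDomain_subtype,
      Finsupp.extendDomain_subtypeDomain _ hfs]
  have hcomb : Finsupp.linearCombination R
      (fun u : NormalWords G => (idealSubmodule I).mkQ (mono R (u : Word n))) l = 0 := by
    rw [← mkQ_embDomain, hFl, ← LinearMap.mem_ker, Submodule.ker_mkQ]
    exact hfI
  have hl0 := linearIndependent_iff.mp h l hcomb
  rw [← hFl, hl0, Finsupp.embDomain_zero]
  rfl

lemma span_normal_eq_top (hord : IsMonomialOrder n) {G : Set (FreeAlg R n)}
    {I : TwoSidedIdeal (FreeAlg R n)}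
    (hred : ∀ w : Word n, w ∉ NormalWords G →
      ∃ p : FreeAlg R n, p ∈ I ∧ p.coeff w = 1 ∧ ∀ v, w < v → p.coeff v = 0) :
    Submodule.span R (Set.range fun u : NormalWords G =>
      (idealSubmodule I).mkQ (mono R (u : Word n))) = ⊤ := by
  rw [Submodule.eq_top_iff']
  suffices H : ∀ w : Word n, ∀ f : FreeAlg R n, f ≠ 0 → LMon f = w →
      (idealSubmodule I).mkQ f ∈ Submodule.span R (Set.range fun u : NormalWords G =>
        (idealSubmodule I).mkQ (mono R (u : Word n))) by
    intro x
    obtain ⟨f, rfl⟩ := (idealSubmodule I).mkQ_surjective x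
    rcases eq_or_ne f 0 with rfl | hf
    · simp
    · exact H _ f hf rfl
  intro w
  refine hord.1.wf.induction (C := fun w => ∀ f : FreeAlg R n, f ≠ 0 → LMon f = w →
      (idealSubmodule I).mkQ f ∈ Submodule.span R (Set.range fun u : NormalWords G =>
        (idealSubmodule I).mkQ (mono R (u : Word n)))) w ?_
  intro w IH f hf hLM
  subst hLM
  by_cases hw : LMon f ∈ NormalWords G
  · set c := f.coeff (LMon f) with hc
    set f' := f - c • mono R (LMon f) with hf'def
    have hkey : ∀ v, LMon f ≤ v → f'.coeff v = 0 := by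
      intro v hv
      rw [hf'def, MonoidAlgebra.coeff_sub, Finsupp.sub_apply, ← single_eq_smul_mono,
        MonoidAlgebra.coeff_single]
      rcases eq_or_lt_of_le hv with rfl | hlt
      · rw [Finsupp.single_eq_same, hc, sub_self]
      · rw [Finsupp.single_eq_of_ne' (ne_of_lt hlt), apply_eq_zero_of_LMon_lt hlt, sub_zero]
    have hmem1 : (idealSubmodule I).mkQ (mono R (LMon f)) ∈
        Submodule.span R (Set.range fun u : NormalWords G =>
          (idealSubmodule I).mkQ (mono R (u : Word n))) :=
      Submodule.subset_span ⟨⟨LMon f, hw⟩, rfl⟩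
    have hsum : (idealSubmodule I).mkQ f =
        c • (idealSubmodule I).mkQ (mono R (LMon f)) + (idealSubmodule I).mkQ f' := by
      rw [hf'def, map_sub, map_smul]
      abel
    rw [hsum]
    refine Submodule.add_mem _ (Submodule.smul_mem _ _ hmem1) ?_
    rcases eq_or_ne f' 0 with h0 | h0
    · simp [h0]
    · exact IH (LMon f') (LMon_lt_of h0 hkey) f' h0 rfl
  · obtain ⟨p, hpI, hpw, hptop⟩ := hred _ hw
    set c := f.coeff (LMon f) with hc
    set f' := f - c • p with hf'def
    have hkey : ∀ v, LMon f ≤ v → f'.coeff v = 0 := by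
      intro v hv
      rw [hf'def, MonoidAlgebra.coeff_sub, Finsupp.sub_apply, MonoidAlgebra.coeff_smul,
        Finsupp.smul_apply, smul_eq_mul]
      rcases eq_or_lt_of_le hv with rfl | hlt
      · rw [hpw, mul_one, hc, sub_self]
      · rw [hptop v hlt, mul_zero, apply_eq_zero_of_LMon_lt hlt, sub_zero]
    have heq : (idealSubmodule I).mkQ f = (idealSubmodule I).mkQ f' := by
      rw [hf'def, map_sub, map_smul]
      have : (idealSubmodule I).mkQ p = 0 := by
        rw [← LinearMap.mem_ker, Submodule.ker_mkQ]
        exact hpI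
      rw [this, smul_zero, sub_zero]
    rw [heq]
    rcases eq_or_ne f' 0 with h0 | h0
    · simp [h0]
    · exact IH (LMon f') (LMon_lt_of h0 hkey) f' h0 rfl

lemma normal_of_mul_mul {G : Set (FreeAlg R n)} {a b c : Word n}
    (h : a * b * c ∈ NormalWords G) : b ∈ NormalWords G := by
  intro g hg hdvd
  obtain ⟨w, s, rfl⟩ := hdvd
  exact h g hg ⟨a * w, s * c, by simp [mul_assoc]⟩

/-- The two-sided ideal of elements supported on non-normal words. -/
def Kideal (G : Set (FreeAlg R n)) : TwoSidedIdeal (FreeAlg R n) :=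
  TwoSidedIdeal.mk' {f : FreeAlg R n | ∀ u ∈ f.coeff.support, u ∉ NormalWords G}
    (by simp)
    (by
      intro x y hx hy u hu
      rw [MonoidAlgebra.coeff_add] at hu
      rcases Finset.mem_union.mp (Finsupp.support_add hu) with h | h
      exacts [hx u h, hy u h])
    (by
      intro x hx u hu
      exact hx u (by rwa [MonoidAlgebra.coeff_neg, Finsupp.support_neg] at hu))
    (by
      intro x y hy u hu
      obtain ⟨a, _, b, hb, rfl⟩ := Finset.mem_mul.mp (MonoidAlgebra.support_coeff_mul_subset x y hu)
      intro hN
      exact hy b hb (normal_of_mul_mul (a := a) (c := 1) (by rwa [mul_one])))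
    (by
      intro x y hx u hu
      obtain ⟨a, ha, b, _, rfl⟩ := Finset.mem_mul.mp (MonoidAlgebra.support_coeff_mul_subset x y hu)
      intro hN
      exact hx a ha (normal_of_mul_mul (a := 1) (c := b) (by rwa [one_mul])))

lemma mem_Kideal {G : Set (FreeAlg R n)} {f : FreeAlg R n} :
    f ∈ Kideal G ↔ ∀ u ∈ f.coeff.support, u ∉ NormalWords G :=
  TwoSidedIdeal.mem_mk' _ _ _ _ _ _ _

lemma mem_J_not_normal {G : Set (FreeAlg R n)}
    (hGB : IsMonicGB G (TwoSidedIdeal.span G)) {f : FreeAlg R n}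
    (hf : f ∈ TwoSidedIdeal.span (mono R '' LMset
      ((TwoSidedIdeal.span G : TwoSidedIdeal (FreeAlg R n)) : Set (FreeAlg R n)))) :
    ∀ u ∈ f.coeff.support, u ∉ NormalWords G := by
  rw [← mem_Kideal]
  refine TwoSidedIdeal.mem_span_iff.mp hf (Kideal G) ?_
  rintro x ⟨u, ⟨h, hhI, hh0, rfl⟩, rfl⟩
  rw [SetLike.mem_coe, mem_Kideal]
  intro v hv
  rw [mono_eq_single, MonoidAlgebra.coeff_single] at hv
  have hvu : v = LMon h := Finset.mem_singleton.mp (Finsupp.support_single_subset hv)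
  subst hvu
  obtain ⟨g, hg, w, s, hws⟩ := hGB.2 h hhI hh0
  exact fun hN => hN g hg ⟨w, s, hws⟩

lemma isMonicGB_of_normal_zero (hord : IsMonomialOrder n) {G : Set (FreeAlg R n)}
    (hmonic : ∀ g ∈ G, IsMonic g)
    (Hind : ∀ f : FreeAlg R n, f ∈ TwoSidedIdeal.span G →
      (∀ u ∈ f.coeff.support, u ∈ NormalWords G) → f = 0) :
    IsMonicGB G (TwoSidedIdeal.span G) := by
  refine ⟨hmonic, ?_⟩
  have key : ∀ w : Word n, ∀ f : FreeAlg R n, f ∈ TwoSidedIdeal.span G → f ≠ 0 →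
      LMon f ∈ NormalWords G →
      MonoidAlgebra.ofCoeff (Finsupp.filter (fun u => u ∉ NormalWords G) f.coeff) ≠ 0 →
      LMon (MonoidAlgebra.ofCoeff (Finsupp.filter (fun u => u ∉ NormalWords G) f.coeff)) = w → False := by
    intro w
    refine hord.1.wf.induction (C := fun w => ∀ f : FreeAlg R n,
        f ∈ TwoSidedIdeal.span G → f ≠ 0 → LMon f ∈ NormalWords G →
        MonoidAlgebra.ofCoeff (Finsupp.filter (fun u => u ∉ NormalWords G) f.coeff) ≠ 0 →
        LMon (MonoidAlgebra.ofCoeff (Finsupp.filter (fun u => u ∉ NormalWords G) f.coeff)) = w → False) w ?_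
    intro w IH f hfI hf hN hb hw
    have hBw : (MonoidAlgebra.ofCoeff (Finsupp.filter (fun u => u ∉ NormalWords G) f.coeff)).coeff w ≠ 0 := by
      rw [← hw]
      exact apply_LMon_ne_zero hb
    rw [MonoidAlgebra.coeff_ofCoeff, Finsupp.filter_apply] at hBw
    have hwN : w ∉ NormalWords G := by
      by_contra h
      rw [if_neg (not_not.mpr h)] at hBw
      exact hBw rfl
    rw [if_pos hwN] at hBw
    have hwlt : w < LMon f := lt_of_le_of_ne (le_LMon hf hBw) fun h => hwN (h ▸ hN)
    obtain ⟨p, hpI, hpw, hptop⟩ := redStep hord hmonic hwN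
    set f' := f - f.coeff w • p with hf'def
    have hf'I : f' ∈ TwoSidedIdeal.span G :=
      TwoSidedIdeal.sub_mem _ hfI (smul_mem_tsi _ hpI)
    have htop : ∀ v, w < v → f'.coeff v = f.coeff v := by
      intro v hv
      rw [hf'def, MonoidAlgebra.coeff_sub, Finsupp.sub_apply, MonoidAlgebra.coeff_smul, Finsupp.smul_apply, hptop v hv, smul_zero, sub_zero]
    have hf'LM : f'.coeff (LMon f) ≠ 0 := by
      rw [htop _ hwlt]
      exact apply_LMon_ne_zero hf
    have hf'ne : f' ≠ 0 := fun h => hf'LM (by simp [h])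
    have hLM' : LMon f' = LMon f := LMon_eq_of hf'LM fun u hu => by
      rw [htop u (hwlt.trans hu)]
      exact apply_eq_zero_of_LMon_lt hu
    have hf'w : f'.coeff w = 0 := by
      rw [hf'def, MonoidAlgebra.coeff_sub, Finsupp.sub_apply, MonoidAlgebra.coeff_smul, Finsupp.smul_apply, hpw, smul_eq_mul, mul_one, sub_self]
    have hB'key : ∀ v, w ≤ v → (MonoidAlgebra.ofCoeff (Finsupp.filter (fun u => u ∉ NormalWords G) f'.coeff)).coeff v = 0 := by
      intro v hv
      rw [MonoidAlgebra.coeff_ofCoeff, Finsupp.filter_apply]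
      split_ifs with hvN
      · rfl
      · rcases eq_or_lt_of_le hv with rfl | hlt
        · exact hf'w
        · rw [htop v hlt]
          by_contra hfv
          have hvB : v ∈ (MonoidAlgebra.ofCoeff (Finsupp.filter (fun u => u ∉ NormalWords G) f.coeff)).coeff.support := by
            rw [MonoidAlgebra.coeff_ofCoeff, Finsupp.mem_support_iff, Finsupp.filter_apply, if_pos hvN]
            exact hfv
          have : v ≤ w := hw ▸ le_LMon hb (Finsupp.mem_support_iff.mp hvB)
          exact absurd this (not_le.mpr hlt)
    rcases eq_or_ne (MonoidAlgebra.ofCoeff (Finsupp.filter (fun u => u ∉ NormalWords G) f'.coeff)) 0 with h0 | h0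
    · refine hf'ne (Hind f' hf'I ?_)
      intro u hu
      by_contra huN
      have : f'.coeff u = 0 := by
        have h0u := DFunLike.congr_fun (congrArg MonoidAlgebra.coeff h0) u
        rwa [MonoidAlgebra.coeff_ofCoeff, Finsupp.filter_apply, if_pos huN, MonoidAlgebra.coeff_zero, Finsupp.coe_zero, Pi.zero_apply] at h0u
      exact Finsupp.mem_support_iff.mp hu this
    · exact IH (LMon (MonoidAlgebra.ofCoeff (Finsupp.filter (fun u => u ∉ NormalWords G) f'.coeff)))
        (LMon_lt_of h0 hB'key) f' hf'I hf'ne (hLM' ▸ hN) h0 rfl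
  intro f hfI hf
  by_contra hcon
  push_neg at hcon
  have hN : LMon f ∈ NormalWords G := hcon
  rcases eq_or_ne (MonoidAlgebra.ofCoeff (Finsupp.filter (fun u => u ∉ NormalWords G) f.coeff)) 0 with h0 | h0
  · refine hf (Hind f hfI ?_)
    intro u hu
    by_contra huN
    have : f.coeff u = 0 := by
      have h0u := DFunLike.congr_fun (congrArg MonoidAlgebra.coeff h0) u
      rwa [MonoidAlgebra.coeff_ofCoeff, Finsupp.filter_apply, if_pos huN, MonoidAlgebra.coeff_zero, Finsupp.coe_zero, Pi.zero_apply] at h0u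
    exact Finsupp.mem_support_iff.mp hu this
  · exact key _ f hfI hf hN h0 rfl

end Aux

/-- For a monic subset `G` generating `I = ⟨G⟩`: `G` is a monic Gröbner
basis of `I` iff the canonical image of `N(G)` is a free `R`-basis of `R⟨X⟩/I`, and in
that case the canonical image of `N(G)` is also a free `R`-basis of `R⟨X⟩/⟨LM(I)⟩`. -/
theorem monicGB_iff_normalWords_basis [LinearOrder (Word n)] (hord : IsMonomialOrder n)
    (G : Set (FreeAlg R n)) (hmonic : ∀ g ∈ G, IsMonic g) :
    (IsMonicGB G (TwoSidedIdeal.span G) ↔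
        ImageFreeBasis (TwoSidedIdeal.span G) (NormalWords G)) ∧
    (IsMonicGB G (TwoSidedIdeal.span G) →
        ImageFreeBasis
          (TwoSidedIdeal.span (mono R '' LMset
            ((TwoSidedIdeal.span G : TwoSidedIdeal (FreeAlg R n)) : Set (FreeAlg R n))))
          (NormalWords G)) := by
  constructor
  · constructor
    · intro hGB
      refine ⟨linearIndependent_normal ?_, span_normal_eq_top hord ?_⟩
      · intro f hfI hfs
        by_contra hf0
        obtain ⟨g, hg, hdvd⟩ := hGB.2 f hfI hf0
        exact hfs (LMon f) (LMon_mem_support hf0) g hg hdvd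
      · exact fun w hw => redStep hord hmonic hw
    · rintro ⟨hind, -⟩
      exact isMonicGB_of_normal_zero hord hmonic
        fun f hfI hfs => normal_eq_zero_of_linearIndependent hind hfI hfs
  · intro hGB
    refine ⟨linearIndependent_normal ?_, span_normal_eq_top hord ?_⟩
    · intro f hfJ hfs
      have hnot := mem_J_not_normal hGB hfJ
      by_contra hf0
      exact hnot (LMon f) (LMon_mem_support hf0) (hfs (LMon f) (LMon_mem_support hf0))
    · intro w hw
      refine ⟨mono R w, ?_, Finsupp.single_eq_same, fun v hv =>
        Finsupp.single_eq_of_ne' (ne_of_lt hv)⟩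
      obtain ⟨g, hg, a, b, rfl⟩ := exists_dvd_of_not_normal hw
      have hg0 := (hmonic g hg).1
      have hsplit : mono R (a * LMon g * b) = mono R a * mono R (LMon g) * mono R b := by
        simp [mono, map_mul]
      rw [hsplit]
      refine TwoSidedIdeal.mul_mem_right _ _ _ (TwoSidedIdeal.mul_mem_left _ _ _
        (TwoSidedIdeal.subset_span ?_))
      exact ⟨LMon g, ⟨g, TwoSidedIdeal.subset_span hg, hg0, rfl⟩, rfl⟩
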